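/- Let f : ℝ^(m×n) → ℝ be convex differentiable, k ≥ 2, L_k(M₁,…,M_k) = f(M_k⋯M₁) with d_k = m, d₀ = n, and d = min_i d_i attained at an interior index j (0 < j < k). If (M₁,…,M_k) is a local minimum of L_k and f'(M_k⋯M₁) ≠ 0, then both A = M_k⋯M_{j+1} and B = M_j⋯M₁ have rank exactly d. -/

import Mathlib

attribute [local instance] Matrix.frobeniusNormedAddCommGroup Matrix.frobeniusNormedSpace

/-- Product `M (b-1) * ⋯ * M a` of a chain of matrices (identity when `b = a`,
junk value `0` when `b < a`). -/
def chainProd (d : ℕ → ℕ) (M : ∀ i : ℕ, Matrix (Fin (d (i + 1))) (Fin (d i)) ℝ)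
    (a : ℕ) : (b : ℕ) → Matrix (Fin (d b)) (Fin (d a)) ℝ
  | 0 => if h : 0 = a then by rw [← h]; exact 1 else 0
  | (b + 1) => if h : b + 1 = a then by rw [← h]; exact 1
      else M b * chainProd d M a b

/-- Extend a `Fin k`-indexed tuple of layer matrices to an `ℕ`-indexed one (by `0`). -/
def ext (d : ℕ → ℕ) (k : ℕ)
    (N : ∀ i : Fin k, Matrix (Fin (d (i.1 + 1))) (Fin (d i.1)) ℝ) :
    ∀ i : ℕ, Matrix (Fin (d (i + 1))) (Fin (d i)) ℝ :=
  fun i => if h : i < k then N ⟨i, h⟩ else 0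

namespace Stmt10Aux

open Matrix

/-! ### Generic helper lemmas -/

/-- descending induction helper -/
theorem downInd (S : ℕ → Prop) (c : ℕ) (base : S c)
    (step : ∀ a, a + 1 ≤ c → S (a + 1) → S a) : ∀ a, a ≤ c → S a := by
  have key : ∀ m a, a + m = c → S a := by
    intro m
    induction m with
    | zero =>
        intro a ha
        rw [show a = c by omega]
        exact base
    | succ m ih =>
        intro a ha
        exact step a (by omega) (ih (a + 1) (by omega))
  intro a ha
  exact key (c - a) a (by omega)

theorem trace_zero_matrix {p q : ℕ} (X : Matrix (Fin p) (Fin q) ℝ)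
    (h : ∀ Δ : Matrix (Fin q) (Fin p) ℝ, (X * Δ).trace = 0) : X = 0 := by
  have hsum : ∑ i, ∑ j, X i j * X i j = 0 := by
    simpa [Matrix.trace, Matrix.diag, Matrix.mul_apply, Matrix.transpose_apply] using h Xᵀ
  ext i j
  have h3 := (Finset.sum_eq_zero_iff_of_nonneg
    (fun i _ => Finset.sum_nonneg (fun j _ => mul_self_nonneg (X i j)))).mp hsum i
    (Finset.mem_univ i)
  have h4 := (Finset.sum_eq_zero_iff_of_nonneg
    (fun j _ => mul_self_nonneg (X i j))).mp h3 j (Finset.mem_univ j)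
  simpa using mul_self_eq_zero.mp h4

theorem extract_left {p q s : ℕ} (w : Fin q → ℝ) (hw : w ≠ 0) (Y : Matrix (Fin p) (Fin s) ℝ)
    (h : ∀ u : Fin p → ℝ, vecMulVec w u * Y = 0) : Y = 0 := by
  obtain ⟨i0, hi0⟩ := Function.ne_iff.mp hw
  ext r j
  have h1 := congrFun (congrFun (h (Pi.single r 1)) i0) j
  simp only [Matrix.mul_apply, vecMulVec_apply, Matrix.zero_apply] at h1
  rw [Finset.sum_eq_single r] at h1
  · simp only [Pi.single_eq_same, mul_one] at h1
    simpa using (mul_eq_zero.mp h1).resolve_left (by simpa using hi0)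
  · intro b _ hb; simp [Pi.single_apply, hb]
  · simp

theorem extract_right {p q s : ℕ} (w : Fin q → ℝ) (hw : w ≠ 0) (Y : Matrix (Fin s) (Fin p) ℝ)
    (h : ∀ z : Fin p → ℝ, Y * vecMulVec z w = 0) : Y = 0 := by
  obtain ⟨j0, hj0⟩ := Function.ne_iff.mp hw
  ext i r
  have h1 := congrFun (congrFun (h (Pi.single r 1)) i) j0
  simp only [Matrix.mul_apply, vecMulVec_apply, Matrix.zero_apply] at h1
  rw [Finset.sum_eq_single r] at h1
  · simp only [Pi.single_eq_same, one_mul] at h1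
    simpa using (mul_eq_zero.mp h1).resolve_right (by simpa using hj0)
  · intro b _ hb; simp [Pi.single_apply, hb]
  · simp

theorem smul_extract {p q : ℕ} (X : Matrix (Fin p) (Fin q) ℝ)
    (h : ∀ᶠ t in nhds (0:ℝ), t • X = 0) : X = 0 := by
  obtain ⟨ε, hε, hball⟩ := Metric.eventually_nhds_iff.mp h
  have h1 : (ε/2) • X = 0 := hball (by
    rw [Real.dist_eq, sub_zero, abs_of_nonneg (by linarith)]; linarith)
  rcases smul_eq_zero.mp h1 with h2 | h2
  · linarith
  · exact h2

theorem exists_mulVec_zero {p q : ℕ} (A : Matrix (Fin p) (Fin q) ℝ) (h : A.rank < q) :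
    ∃ w : Fin q → ℝ, w ≠ 0 ∧ A *ᵥ w = 0 := by
  by_contra hc
  push_neg at hc
  have hinj : LinearMap.ker A.mulVecLin = ⊥ := by
    rw [LinearMap.ker_eq_bot']
    intro w hw
    by_contra hw0
    exact (hc w hw0) hw
  have h2 := LinearMap.finrank_range_add_finrank_ker A.mulVecLin
  rw [hinj, finrank_bot] at h2
  have : A.rank = q := by
    simpa [Matrix.rank, Module.finrank_pi] using h2
  omega

theorem exists_vecMul_zero {p q : ℕ} (A : Matrix (Fin p) (Fin q) ℝ) (h : A.rank < p) :
    ∃ w : Fin p → ℝ, w ≠ 0 ∧ w ᵥ* A = 0 := by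
  obtain ⟨w, hw0, hw⟩ := exists_mulVec_zero Aᵀ (by rwa [rank_transpose])
  exact ⟨w, hw0, by rwa [mulVec_transpose] at hw⟩

/-- If the right factor has full row rank then multiplication preserves rank. -/
theorem rank_mul_full_row {p q r : ℕ} (A : Matrix (Fin r) (Fin p) ℝ)
    (B : Matrix (Fin p) (Fin q) ℝ)
    (h : ∀ w, w ᵥ* B = 0 → w = 0) : (A * B).rank = A.rank := by
  have hsurj : LinearMap.range B.mulVecLin = ⊤ := by
    have hrk : B.rank = p := by
      by_contra hne
      have hle : B.rank ≤ p := (rank_le_card_height B).trans (by simp)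
      have hlt : Bᵀ.rank < p := by rw [rank_transpose]; omega
      obtain ⟨w, hw0, hw⟩ := exists_mulVec_zero Bᵀ (by simpa using hlt)
      exact hw0 (h w (by rwa [mulVec_transpose] at hw))
    have : Module.finrank ℝ (LinearMap.range B.mulVecLin) = Module.finrank ℝ (Fin p → ℝ) := by
      simpa [Matrix.rank, Module.finrank_pi] using hrk
    exact Submodule.eq_top_of_finrank_eq this
  rw [Matrix.rank, Matrix.rank, mulVecLin_mul, LinearMap.range_comp, hsurj, Submodule.map_top]

/-- If the left factor has full column rank then multiplication preserves rank. -/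
theorem rank_mul_full_col {p q r : ℕ} (A : Matrix (Fin r) (Fin p) ℝ)
    (B : Matrix (Fin p) (Fin q) ℝ)
    (h : ∀ w, A *ᵥ w = 0 → w = 0) : (A * B).rank = B.rank := by
  have hker : LinearMap.ker A.mulVecLin = ⊥ := by
    rw [LinearMap.ker_eq_bot']
    intro w hw; exact h w hw
  have h1 := LinearMap.finrank_range_add_finrank_ker (A * B).mulVecLin
  have h2 := LinearMap.finrank_range_add_finrank_ker B.mulVecLin
  have hkk : LinearMap.ker (A * B).mulVecLin = LinearMap.ker B.mulVecLin := by
    rw [mulVecLin_mul, LinearMap.ker_comp, hker, Submodule.comap_bot]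
  rw [hkk] at h1
  rw [Matrix.rank, Matrix.rank]
  omega

theorem vecMulVec_mul {p q s : ℕ} (u : Fin p → ℝ) (w : Fin q → ℝ)
    (P : Matrix (Fin q) (Fin s) ℝ) : vecMulVec u w * P = vecMulVec u (w ᵥ* P) := by
  ext i j
  simp [Matrix.mul_apply, vecMulVec_apply, Matrix.vecMul, dotProduct, Finset.mul_sum,
    mul_assoc]

theorem mul_vecMulVec {p q s : ℕ} (w : Fin q → ℝ) (z : Fin p → ℝ)
    (P : Matrix (Fin s) (Fin q) ℝ) : P * vecMulVec w z = vecMulVec (P *ᵥ w) z := by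
  ext i j
  simp [Matrix.mul_apply, vecMulVec_apply, Matrix.mulVec, dotProduct, Finset.sum_mul,
    mul_assoc]

theorem vecMulVec_zero_left {p q : ℕ} (w : Fin q → ℝ) :
    vecMulVec (0 : Fin p → ℝ) w = 0 := by
  ext i j; simp [vecMulVec_apply]

theorem vecMulVec_zero_right {p q : ℕ} (u : Fin p → ℝ) :
    vecMulVec u (0 : Fin q → ℝ) = 0 := by
  ext i j; simp [vecMulVec_apply]

theorem vecMulVec_transpose {p q : ℕ} (u : Fin p → ℝ) (w : Fin q → ℝ) :
    (vecMulVec u w)ᵀ = vecMulVec w u := by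
  ext i j; simp [vecMulVec_apply, Matrix.transpose_apply, mul_comm]

/-! ### chainProd lemmas -/

variable (d : ℕ → ℕ)

theorem chainProd_self (Mf : ∀ i : ℕ, Matrix (Fin (d (i + 1))) (Fin (d i)) ℝ) (a : ℕ) :
    chainProd d Mf a a = 1 := by
  cases a with
  | zero => simp [chainProd]
  | succ n => simp [chainProd]

theorem chainProd_succ (Mf : ∀ i : ℕ, Matrix (Fin (d (i + 1))) (Fin (d i)) ℝ) {a b : ℕ}
    (h : b + 1 ≠ a) : chainProd d Mf a (b + 1) = Mf b * chainProd d Mf a b := by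
  simp [chainProd, h]

theorem chainProd_of_lt (Mf : ∀ i : ℕ, Matrix (Fin (d (i + 1))) (Fin (d i)) ℝ) {a b : ℕ}
    (h : b < a) : chainProd d Mf a b = 0 := by
  induction b with
  | zero =>
      have h0 : (0:ℕ) ≠ a := by omega
      simp [chainProd, h0]
  | succ n ih =>
      have h1 : n + 1 ≠ a := by omega
      rw [chainProd_succ d Mf h1, ih (by omega)]
      simp

theorem chainProd_split (Mf : ∀ i : ℕ, Matrix (Fin (d (i + 1))) (Fin (d i)) ℝ) {a b c : ℕ}
    (hab : a ≤ b) (hbc : b ≤ c) :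
    chainProd d Mf a c = chainProd d Mf b c * chainProd d Mf a b := by
  induction c, hbc using Nat.le_induction with
  | base => rw [chainProd_self]; simp
  | succ c hbc ih =>
      have h1 : c + 1 ≠ a := by omega
      have h2 : c + 1 ≠ b := by omega
      rw [chainProd_succ d Mf h1, chainProd_succ d Mf h2, ih, Matrix.mul_assoc]

theorem chainProd_congr {Mf Mg : ∀ i : ℕ, Matrix (Fin (d (i + 1))) (Fin (d i)) ℝ} {a b : ℕ}
    (h : ∀ i, a ≤ i → i < b → Mf i = Mg i) : chainProd d Mf a b = chainProd d Mg a b := by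
  induction b with
  | zero => simp [chainProd]
  | succ n ih =>
      by_cases hc : n + 1 = a
      · subst hc; rw [chainProd_self, chainProd_self]
      · rcases lt_or_ge n a with hna | hna
        · rw [chainProd_of_lt d Mf (by omega), chainProd_of_lt d Mg (by omega)]
        · rw [chainProd_succ d Mf hc, chainProd_succ d Mg hc,
            h n hna (by omega), ih (fun i h1 h2 => h i h1 (by omega))]

theorem chainProd_layer (Mf : ∀ i : ℕ, Matrix (Fin (d (i + 1))) (Fin (d i)) ℝ) {a i b : ℕ}
    (hai : a ≤ i) (hib : i < b) :
    chainProd d Mf a b = chainProd d Mf (i + 1) b * Mf i * chainProd d Mf a i := by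
  rw [chainProd_split d Mf (show a ≤ i + 1 by omega) (show i + 1 ≤ b by omega),
    chainProd_succ d Mf (show i + 1 ≠ a by omega), Matrix.mul_assoc]

/-! ### Configurations -/

variable (k : ℕ)

/-- chain product of a configuration -/
def PP (N : ∀ i : Fin k, Matrix (Fin (d (i.1 + 1))) (Fin (d i.1)) ℝ) (a b : ℕ) :
    Matrix (Fin (d b)) (Fin (d a)) ℝ := chainProd d (ext d k N) a b

/-- perturbation of one layer -/
def pert (N : ∀ i : Fin k, Matrix (Fin (d (i.1 + 1))) (Fin (d i.1)) ℝ) (i : Fin k)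
    (Δ : Matrix (Fin (d (i.1 + 1))) (Fin (d i.1)) ℝ) :
    ∀ i : Fin k, Matrix (Fin (d (i.1 + 1))) (Fin (d i.1)) ℝ :=
  Function.update N i (N i + Δ)

variable {d k}

theorem ext_self (N : ∀ i : Fin k, Matrix (Fin (d (i.1 + 1))) (Fin (d i.1)) ℝ) (i : Fin k) :
    _root_.ext d k N i.1 = N i := by
  unfold _root_.ext
  rw [dif_pos i.isLt]

theorem ext_pert_ne (N : ∀ i : Fin k, Matrix (Fin (d (i.1 + 1))) (Fin (d i.1)) ℝ) (i : Fin k)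
    (Δ : Matrix (Fin (d (i.1 + 1))) (Fin (d i.1)) ℝ) (m : ℕ) (hm : m ≠ i.1) :
    _root_.ext d k (pert d k N i Δ) m = _root_.ext d k N m := by
  unfold _root_.ext pert
  by_cases h : m < k
  · rw [dif_pos h, dif_pos h, Function.update_of_ne (by simp [Fin.ext_iff, hm])]
  · rw [dif_neg h, dif_neg h]

theorem ext_pert_self (N : ∀ i : Fin k, Matrix (Fin (d (i.1 + 1))) (Fin (d i.1)) ℝ) (i : Fin k)
    (Δ : Matrix (Fin (d (i.1 + 1))) (Fin (d i.1)) ℝ) :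
    _root_.ext d k (pert d k N i Δ) i.1 = N i + Δ := by
  unfold _root_.ext pert
  rw [dif_pos i.isLt]
  exact Function.update_self i (N i + Δ) N

theorem PP_pert_out (N : ∀ i : Fin k, Matrix (Fin (d (i.1 + 1))) (Fin (d i.1)) ℝ) (i : Fin k)
    (Δ : Matrix (Fin (d (i.1 + 1))) (Fin (d i.1)) ℝ) {a b : ℕ} (h : i.1 < a ∨ b ≤ i.1) :
    PP d k (pert d k N i Δ) a b = PP d k N a b := by
  unfold PP
  apply chainProd_congr
  intro m hm1 hm2
  exact ext_pert_ne N i Δ m (by omega)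

theorem PP_layer (N : ∀ i : Fin k, Matrix (Fin (d (i.1 + 1))) (Fin (d i.1)) ℝ) (i : Fin k)
    {a b : ℕ} (ha : a ≤ i.1) (hb : i.1 < b) :
    PP d k N a b = PP d k N (i.1 + 1) b * N i * PP d k N a i.1 := by
  unfold PP
  rw [chainProd_layer d (_root_.ext d k N) ha hb, ext_self]

theorem PP_pert_mid (N : ∀ i : Fin k, Matrix (Fin (d (i.1 + 1))) (Fin (d i.1)) ℝ) (i : Fin k)
    (Δ : Matrix (Fin (d (i.1 + 1))) (Fin (d i.1)) ℝ) {a b : ℕ} (ha : a ≤ i.1) (hb : i.1 < b) :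
    PP d k (pert d k N i Δ) a b
      = PP d k N a b + PP d k N (i.1 + 1) b * Δ * PP d k N a i.1 := by
  have h1 := PP_layer (d := d) (k := k) (pert d k N i Δ) i ha hb
  rw [show PP d k (pert d k N i Δ) (i.1 + 1) b = PP d k N (i.1 + 1) b from
      PP_pert_out N i Δ (Or.inl (by omega)),
    show PP d k (pert d k N i Δ) a i.1 = PP d k N a i.1 from
      PP_pert_out N i Δ (Or.inr (by omega))] at h1
  have h2 : _root_.ext d k (pert d k N i Δ) i.1 = N i + Δ := ext_pert_self N i Δ
  unfold PP pert at h1 ⊢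
  rw [h1]
  rw [show (Function.update N i (N i + Δ)) i = N i + Δ from Function.update_self i _ N]
  rw [Matrix.mul_add, Matrix.add_mul]
  congr 1
  rw [← ext_self N i]
  exact (chainProd_layer d (_root_.ext d k N) ha hb).symm

theorem PP_split (N : ∀ i : Fin k, Matrix (Fin (d (i.1 + 1))) (Fin (d i.1)) ℝ) {a b c : ℕ}
    (hab : a ≤ b) (hbc : b ≤ c) : PP d k N a c = PP d k N b c * PP d k N a b :=
  chainProd_split d (ext d k N) hab hbc

theorem PP_self (N : ∀ i : Fin k, Matrix (Fin (d (i.1 + 1))) (Fin (d i.1)) ℝ) (a : ℕ) :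
    PP d k N a a = 1 := chainProd_self d (ext d k N) a

/-! ### Dynamics: perturbation families and criticality -/

theorem path_continuous (N : ∀ i : Fin k, Matrix (Fin (d (i.1 + 1))) (Fin (d i.1)) ℝ)
    (i : Fin k) (Δ : Matrix (Fin (d (i.1 + 1))) (Fin (d i.1)) ℝ) :
    Continuous (fun t : ℝ => pert d k N i (t • Δ)) := by
  unfold pert
  apply continuous_pi
  intro l
  by_cases hl : l = i
  · subst hl
    simp only [Function.update_self]
    exact continuous_const.add (continuous_id.smul continuous_const)
  · simp only [Function.update_of_ne hl]
    exact continuous_const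

theorem pert_zero (N : ∀ i : Fin k, Matrix (Fin (d (i.1 + 1))) (Fin (d i.1)) ℝ)
    (i : Fin k) (Δ : Matrix (Fin (d (i.1 + 1))) (Fin (d i.1)) ℝ) :
    pert d k N i ((0:ℝ) • Δ) = N := by
  unfold pert
  simp [Function.update_eq_self]

theorem PP_pert_smul (N : ∀ i : Fin k, Matrix (Fin (d (i.1 + 1))) (Fin (d i.1)) ℝ)
    (i : Fin k) (Δ : Matrix (Fin (d (i.1 + 1))) (Fin (d i.1)) ℝ) (t : ℝ) :
    PP d k (pert d k N i (t • Δ)) 0 k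
      = PP d k N 0 k + t • (PP d k N (i.1 + 1) k * Δ * PP d k N 0 i.1) := by
  rw [PP_pert_mid N i (t • Δ) (Nat.zero_le _) i.isLt, Matrix.mul_smul, Matrix.smul_mul]

variable {f : Matrix (Fin (d k)) (Fin (d 0)) ℝ → ℝ}

theorem isLocalMin_pert {N : ∀ i : Fin k, Matrix (Fin (d (i.1 + 1))) (Fin (d i.1)) ℝ}
    (hN : IsLocalMin (fun N' => f (PP d k N' 0 k)) N) (i : Fin k)
    (Δ : Matrix (Fin (d (i.1 + 1))) (Fin (d i.1)) ℝ)
    (hΔ : PP d k N (i.1 + 1) k * Δ * PP d k N 0 i.1 = 0) :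
    ∀ᶠ t in nhds (0:ℝ), IsLocalMin (fun N' => f (PP d k N' 0 k)) (pert d k N i (t • Δ))
      ∧ PP d k (pert d k N i (t • Δ)) 0 k = PP d k N 0 k := by
  have hprod : ∀ t : ℝ, PP d k (pert d k N i (t • Δ)) 0 k = PP d k N 0 k := by
    intro t
    rw [PP_pert_smul N i Δ t, hΔ, smul_zero, add_zero]
  obtain ⟨U, hUS, hUopen, hNU⟩ := mem_nhds_iff.mp hN
  have htend : Filter.Tendsto (fun t : ℝ => pert d k N i (t • Δ)) (nhds 0) (nhds N) := by
    have h := (path_continuous N i Δ).tendsto 0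
    rwa [pert_zero N i Δ] at h
  have hev : ∀ᶠ t in nhds (0:ℝ), pert d k N i (t • Δ) ∈ U :=
    htend.eventually (Filter.eventually_of_mem (hUopen.mem_nhds hNU) (fun x hx => hx))
  filter_upwards [hev] with t ht
  refine ⟨?_, hprod t⟩
  have hloc : ∀ᶠ x in nhds (pert d k N i (t • Δ)),
      f (PP d k (pert d k N i (t • Δ)) 0 k) ≤ f (PP d k x 0 k) := by
    apply Filter.eventually_of_mem (hUopen.mem_nhds ht)
    intro x hx
    rw [hprod t]
    exact hUS hx
  exact hloc

theorem crit (hdiff : Differentiable ℝ f)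
    {f' : Matrix (Fin (d k)) (Fin (d 0)) ℝ → Matrix (Fin (d k)) (Fin (d 0)) ℝ}
    (hf' : ∀ M H, fderiv ℝ f M H = ((f' M)ᵀ * H).trace)
    {N : ∀ i : Fin k, Matrix (Fin (d (i.1 + 1))) (Fin (d i.1)) ℝ}
    (hN : IsLocalMin (fun N' => f (PP d k N' 0 k)) N) (i : Fin k) :
    (PP d k N (i.1 + 1) k)ᵀ * f' (PP d k N 0 k) * (PP d k N 0 i.1)ᵀ = 0 := by
  have key : ∀ Δ : Matrix (Fin (d (i.1 + 1))) (Fin (d i.1)) ℝ,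
      ((f' (PP d k N 0 k))ᵀ * (PP d k N (i.1 + 1) k * Δ * PP d k N 0 i.1)).trace = 0 := by
    intro Δ
    have hmin0 : IsLocalMin
        (fun t : ℝ => f (PP d k N 0 k + t • (PP d k N (i.1 + 1) k * Δ * PP d k N 0 i.1))) 0 := by
      have htend : Filter.Tendsto (fun t : ℝ => pert d k N i (t • Δ)) (nhds 0) (nhds N) := by
        have h := (path_continuous N i Δ).tendsto 0
        rwa [pert_zero N i Δ] at h
      have hev : ∀ᶠ t in nhds (0:ℝ), f (PP d k N 0 k)
          ≤ f (PP d k N 0 k + t • (PP d k N (i.1 + 1) k * Δ * PP d k N 0 i.1)) := by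
        have h1 := htend.eventually hN
        apply h1.mono
        intro t ht
        have ht2 : f (PP d k N 0 k) ≤ f (PP d k (pert d k N i (t • Δ)) 0 k) := ht
        rwa [PP_pert_smul N i Δ t] at ht2
      refine hev.mono (fun t ht => ?_)
      show f (PP d k N 0 k + (0:ℝ) • (PP d k N (i.1 + 1) k * Δ * PP d k N 0 i.1))
          ≤ f (PP d k N 0 k + t • (PP d k N (i.1 + 1) k * Δ * PP d k N 0 i.1))
      rwa [zero_smul, add_zero]
    have hder : HasDerivAt
        (fun t : ℝ => f (PP d k N 0 k + t • (PP d k N (i.1 + 1) k * Δ * PP d k N 0 i.1)))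
        (fderiv ℝ f (PP d k N 0 k) (PP d k N (i.1 + 1) k * Δ * PP d k N 0 i.1)) 0 := by
      set K := PP d k N (i.1 + 1) k * Δ * PP d k N 0 i.1 with hK
      have h1 : HasDerivAt (fun t : ℝ => PP d k N 0 k + t • K) K 0 := by
        have h1' := ((hasDerivAt_id (0:ℝ)).smul_const K).const_add (PP d k N 0 k)
        rw [one_smul] at h1'
        exact h1'
      have h0 : PP d k N 0 k + (0:ℝ) • K = PP d k N 0 k := by rw [zero_smul, add_zero]
      have h2 := (hdiff (PP d k N 0 k + (0:ℝ) • K)).hasFDerivAt.comp_hasDerivAt 0 h1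
      rw [h0] at h2
      exact h2
    have hzero := hmin0.hasDerivAt_eq_zero hder
    rw [hf'] at hzero
    exact hzero
  have key2 : ∀ Δ : Matrix (Fin (d (i.1 + 1))) (Fin (d i.1)) ℝ,
      ((PP d k N 0 i.1 * (f' (PP d k N 0 k))ᵀ * PP d k N (i.1 + 1) k) * Δ).trace = 0 := by
    intro Δ
    have h1 := key Δ
    rw [show (f' (PP d k N 0 k))ᵀ * (PP d k N (i.1 + 1) k * Δ * PP d k N 0 i.1)
        = ((f' (PP d k N 0 k))ᵀ * PP d k N (i.1 + 1) k * Δ) * PP d k N 0 i.1 by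
      rw [Matrix.mul_assoc, Matrix.mul_assoc, Matrix.mul_assoc]] at h1
    rw [Matrix.trace_mul_comm] at h1
    rw [← h1]
    rw [Matrix.mul_assoc, Matrix.mul_assoc, Matrix.mul_assoc]
  have h3 := trace_zero_matrix _ key2
  have h4 := congrArg Matrix.transpose h3
  rw [Matrix.transpose_zero, Matrix.transpose_mul, Matrix.transpose_mul,
    Matrix.transpose_transpose] at h4
  rw [← Matrix.mul_assoc] at h4
  rw [Matrix.mul_assoc] at h4
  rw [← Matrix.mul_assoc] at h4
  exact h4

/-! ### The A side: the product above the bottleneck has full rank -/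

theorem Aside (hdiff : Differentiable ℝ f)
    {f' : Matrix (Fin (d k)) (Fin (d 0)) ℝ → Matrix (Fin (d k)) (Fin (d 0)) ℝ}
    (hf' : ∀ M H, fderiv ℝ f M H = ((f' M)ᵀ * H).trace)
    {j : ℕ} (hmin : ∀ i ≤ k, d j ≤ d i)
    (W : Matrix (Fin (d k)) (Fin (d 0)) ℝ) (hW : f' W ≠ 0) :
    ∀ n β, k - β ≤ n → j ≤ β → β < k →
      ∀ N, IsLocalMin (fun N' => f (PP d k N' 0 k)) N → PP d k N 0 k = W →
        ¬ (PP d k N β k).rank < d j := by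
  intro n
  induction n with
  | zero => intro β h1 h2 h3; omega
  | succ n ih =>
    intro β hkβ hjβ hβk N₀ hloc₀ hprod₀ hrank₀
    -- the bad set
    have dphase : ∀ a, a ≤ β → ∀ N, (IsLocalMin (fun N' => f (PP d k N' 0 k)) N ∧
        PP d k N 0 k = W ∧ (PP d k N β k).rank < d j) →
        (PP d k N (β + 1) k)ᵀ * f' W * (PP d k N 0 a)ᵀ = 0 := by
      apply downInd
      · -- base a = β
        intro N hN
        have hc : (PP d k N (β + 1) k)ᵀ * f' (PP d k N 0 k) * (PP d k N 0 β)ᵀ = 0 :=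
          crit hdiff hf' hN.1 ⟨β, hβk⟩
        rwa [hN.2.1] at hc
      · -- step a+1 → a
        intro a ha1 hstep N hN
        have hak : a < k := by omega
        have hrk : (PP d k N (a + 1) k).rank < d (a + 1) := by
          have hsplit : PP d k N (a + 1) k = PP d k N β k * PP d k N (a + 1) β :=
            PP_split N (by omega) (by omega)
          calc (PP d k N (a + 1) k).rank ≤ (PP d k N β k).rank := by
                rw [hsplit]; exact rank_mul_le_left _ _
            _ < d j := hN.2.2
            _ ≤ d (a + 1) := hmin _ (by omega)
        obtain ⟨w, hw0, hw⟩ := exists_mulVec_zero _ hrk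
        have key : ∀ z : Fin (d a) → ℝ,
            (PP d k N (β + 1) k)ᵀ * f' W * (PP d k N 0 a)ᵀ * vecMulVec z w = 0 := by
          intro z
          have hvalid : PP d k N (a + 1) k * vecMulVec w z * PP d k N 0 a = 0 := by
            rw [mul_vecMulVec, hw, vecMulVec_zero_left, Matrix.zero_mul]
          have hev := isLocalMin_pert hN.1 ⟨a, hak⟩ (vecMulVec w z) hvalid
          have hXev : ∀ᶠ t in nhds (0:ℝ),
              t • ((PP d k N (β + 1) k)ᵀ * f' W *
                ((vecMulVec w z : Matrix (Fin (d (a+1))) (Fin (d a)) ℝ) * PP d k N 0 a)ᵀ)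
                = 0 := by
            filter_upwards [hev] with t ht
            have hout1 : PP d k (pert d k N ⟨a, hak⟩ (t • vecMulVec w z)) β k
                = PP d k N β k :=
              PP_pert_out N ⟨a, hak⟩ _ (Or.inl (show a < β by omega))
            have heq := hstep (pert d k N ⟨a, hak⟩ (t • vecMulVec w z))
              ⟨ht.1, by rw [ht.2, hN.2.1], by rw [hout1]; exact hN.2.2⟩
            have hout2 : PP d k (pert d k N ⟨a, hak⟩ (t • vecMulVec w z)) (β + 1) k
                = PP d k N (β + 1) k :=
              PP_pert_out N ⟨a, hak⟩ _ (Or.inl (show a < β + 1 by omega))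
            have hmid : PP d k (pert d k N ⟨a, hak⟩ (t • vecMulVec w z)) 0 (a + 1)
                = PP d k N 0 (a + 1) + PP d k N (a + 1) (a + 1) * (t • vecMulVec w z)
                    * PP d k N 0 a :=
              PP_pert_mid N ⟨a, hak⟩ _ (Nat.zero_le _) (Nat.lt_succ_self a)
            rw [hout2, hmid, PP_self, Matrix.one_mul, Matrix.smul_mul,
              Matrix.transpose_add, Matrix.mul_add, hstep N hN, zero_add,
              Matrix.transpose_smul, Matrix.mul_smul] at heq
            exact heq
          have hX := smul_extract _ hXev
          rw [Matrix.transpose_mul, vecMulVec_transpose, ← Matrix.mul_assoc] at hX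
          exact hX
        exact extract_right w hw0 _ key
    have uphase : ∀ b, β + 1 ≤ b → b ≤ k → ∀ N, (IsLocalMin (fun N' => f (PP d k N' 0 k)) N ∧
        PP d k N 0 k = W ∧ (PP d k N β k).rank < d j) → (PP d k N b k)ᵀ * f' W = 0 := by
      intro b hb
      induction b, hb using Nat.le_induction with
      | base =>
        intro hbk N hN
        have h0 := dphase 0 (by omega) N hN
        rwa [PP_self, Matrix.transpose_one, Matrix.mul_one] at h0
      | succ b hb ihb =>
        intro hb1k N hN
        have hbk : b < k := by omega
        by_cases hker : ∃ w : Fin (d b) → ℝ, w ≠ 0 ∧ w ᵥ* PP d k N β b = 0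
        · obtain ⟨w, hw0, hw⟩ := hker
          have key : ∀ u : Fin (d (b + 1)) → ℝ,
              vecMulVec w u * ((PP d k N (b + 1) k)ᵀ * f' W) = 0 := by
            intro u
            have hΔP : (vecMulVec u w : Matrix (Fin (d (b+1))) (Fin (d b)) ℝ)
                * PP d k N β b = 0 := by
              rw [vecMulVec_mul, hw, vecMulVec_zero_right]
            have hvalid : PP d k N (b + 1) k * vecMulVec u w * PP d k N 0 b = 0 := by
              rw [show PP d k N 0 b = PP d k N β b * PP d k N 0 β from
                  PP_split N (Nat.zero_le _) (by omega),
                Matrix.mul_assoc (PP d k N (b + 1) k), ← Matrix.mul_assoc (vecMulVec u w),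
                hΔP, Matrix.zero_mul, Matrix.mul_zero]
            have hev := isLocalMin_pert hN.1 ⟨b, hbk⟩ (vecMulVec u w) hvalid
            have hXev : ∀ᶠ t in nhds (0:ℝ),
                t • ((PP d k N (b + 1) k *
                  (vecMulVec u w : Matrix (Fin (d (b+1))) (Fin (d b)) ℝ))ᵀ * f' W) = 0 := by
              filter_upwards [hev] with t ht
              have hmidβ : PP d k (pert d k N ⟨b, hbk⟩ (t • vecMulVec u w)) β k
                  = PP d k N β k + PP d k N (b + 1) k * (t • vecMulVec u w)
                      * PP d k N β b :=
                PP_pert_mid N ⟨b, hbk⟩ _ (show β ≤ b by omega) (show b < k by omega)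
              have hmidβ' : PP d k (pert d k N ⟨b, hbk⟩ (t • vecMulVec u w)) β k
                  = PP d k N β k := by
                rw [hmidβ, Matrix.mul_smul, Matrix.smul_mul, Matrix.mul_assoc, hΔP,
                  Matrix.mul_zero, smul_zero, add_zero]
              have heq := ihb (by omega) (pert d k N ⟨b, hbk⟩ (t • vecMulVec u w))
                ⟨ht.1, by rw [ht.2, hN.2.1], by rw [hmidβ']; exact hN.2.2⟩
              have hmidb : PP d k (pert d k N ⟨b, hbk⟩ (t • vecMulVec u w)) b k
                  = PP d k N b k + PP d k N (b + 1) k * (t • vecMulVec u w)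
                      * PP d k N b b :=
                PP_pert_mid N ⟨b, hbk⟩ _ (le_refl b) (show b < k by omega)
              rw [hmidb, PP_self, Matrix.mul_one, Matrix.mul_smul,
                Matrix.transpose_add, Matrix.add_mul, ihb (by omega) N hN, zero_add,
                Matrix.transpose_smul, Matrix.smul_mul] at heq
              exact heq
            have hX := smul_extract _ hXev
            rw [Matrix.transpose_mul, vecMulVec_transpose, Matrix.mul_assoc] at hX
            exact hX
          exact extract_left w hw0 _ key
        · push_neg at hker
          have hfull : ∀ w, w ᵥ* PP d k N β b = 0 → w = 0 := by
            intro w hw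
            by_contra h0
            exact (hker w h0) hw
          have hsplit : PP d k N β k = PP d k N b k * PP d k N β b :=
            PP_split N (by omega) (by omega)
          have hrk : (PP d k N b k).rank < d j := by
            have h5 := rank_mul_full_row (PP d k N b k) (PP d k N β b) hfull
            rw [← hsplit] at h5
            rw [← h5]
            exact hN.2.2
          exact absurd hrk (ih b (by omega) (by omega) (by omega) N hN.1 hN.2.1)
    have hfinal := uphase k (by omega) (le_refl k) N₀ ⟨hloc₀, hprod₀, hrank₀⟩
    rw [PP_self, Matrix.transpose_one, Matrix.one_mul] at hfinal
    exact hW hfinal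

/-! ### The B side: the product below the bottleneck has full rank -/

theorem Bside (hdiff : Differentiable ℝ f)
    {f' : Matrix (Fin (d k)) (Fin (d 0)) ℝ → Matrix (Fin (d k)) (Fin (d 0)) ℝ}
    (hf' : ∀ M H, fderiv ℝ f M H = ((f' M)ᵀ * H).trace)
    {j : ℕ} (hjk : j < k) (hmin : ∀ i ≤ k, d j ≤ d i)
    (W : Matrix (Fin (d k)) (Fin (d 0)) ℝ) (hW : f' W ≠ 0) :
    ∀ c, c + 1 ≤ j →
      ∀ N, IsLocalMin (fun N' => f (PP d k N' 0 k)) N → PP d k N 0 k = W →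
        ¬ (PP d k N 0 (c + 1)).rank < d j := by
  intro c
  induction c using Nat.strong_induction_on with
  | _ c ihc =>
    intro hcj N₀ hloc₀ hprod₀ hrank₀
    have hck : c < k := by omega
    have uphase : ∀ b, c + 1 ≤ b → b ≤ k → ∀ N,
        (IsLocalMin (fun N' => f (PP d k N' 0 k)) N ∧ PP d k N 0 k = W ∧
          (PP d k N 0 (c + 1)).rank < d j) →
        (PP d k N b k)ᵀ * f' W * (PP d k N 0 c)ᵀ = 0 := by
      intro b hb
      induction b, hb using Nat.le_induction with
      | base =>
        intro hbk N hN
        have hc : (PP d k N (c + 1) k)ᵀ * f' (PP d k N 0 k) * (PP d k N 0 c)ᵀ = 0 :=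
          crit hdiff hf' hN.1 ⟨c, hck⟩
        rwa [hN.2.1] at hc
      | succ b hb ihb =>
        intro hb1k N hN
        have hbk : b < k := by omega
        have hrk : (PP d k N 0 b).rank < d b := by
          have hsplit : PP d k N 0 b = PP d k N (c + 1) b * PP d k N 0 (c + 1) :=
            PP_split N (by omega) (by omega)
          calc (PP d k N 0 b).rank ≤ (PP d k N 0 (c + 1)).rank := by
                rw [hsplit]; exact rank_mul_le_right _ _
            _ < d j := hN.2.2
            _ ≤ d b := hmin _ (by omega)
        obtain ⟨w, hw0, hw⟩ := exists_vecMul_zero _ hrk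
        have key : ∀ u : Fin (d (b + 1)) → ℝ,
            vecMulVec w u * ((PP d k N (b + 1) k)ᵀ * f' W * (PP d k N 0 c)ᵀ) = 0 := by
          intro u
          have hvalid : PP d k N (b + 1) k * vecMulVec u w * PP d k N 0 b = 0 := by
            rw [Matrix.mul_assoc, vecMulVec_mul, hw, vecMulVec_zero_right, Matrix.mul_zero]
          have hev := isLocalMin_pert hN.1 ⟨b, hbk⟩ (vecMulVec u w) hvalid
          have hXev : ∀ᶠ t in nhds (0:ℝ),
              t • ((PP d k N (b + 1) k *
                (vecMulVec u w : Matrix (Fin (d (b+1))) (Fin (d b)) ℝ))ᵀ * f' W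
                  * (PP d k N 0 c)ᵀ) = 0 := by
            filter_upwards [hev] with t ht
            have hout1 : PP d k (pert d k N ⟨b, hbk⟩ (t • vecMulVec u w)) 0 (c + 1)
                = PP d k N 0 (c + 1) :=
              PP_pert_out N ⟨b, hbk⟩ _ (Or.inr (show c + 1 ≤ b by omega))
            have heq := ihb (by omega) (pert d k N ⟨b, hbk⟩ (t • vecMulVec u w))
              ⟨ht.1, by rw [ht.2, hN.2.1], by rw [hout1]; exact hN.2.2⟩
            have hout2 : PP d k (pert d k N ⟨b, hbk⟩ (t • vecMulVec u w)) 0 c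
                = PP d k N 0 c :=
              PP_pert_out N ⟨b, hbk⟩ _ (Or.inr (show c ≤ b by omega))
            have hmidb : PP d k (pert d k N ⟨b, hbk⟩ (t • vecMulVec u w)) b k
                = PP d k N b k + PP d k N (b + 1) k * (t • vecMulVec u w)
                    * PP d k N b b :=
              PP_pert_mid N ⟨b, hbk⟩ _ (le_refl b) (show b < k by omega)
            rw [hout2, hmidb, PP_self, Matrix.mul_one, Matrix.mul_smul,
              Matrix.transpose_add, Matrix.add_mul, Matrix.add_mul,
              ihb (by omega) N hN, zero_add, Matrix.transpose_smul,
              Matrix.smul_mul, Matrix.smul_mul] at heq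
            exact heq
          have hX := smul_extract _ hXev
          rw [Matrix.transpose_mul, vecMulVec_transpose, Matrix.mul_assoc,
            Matrix.mul_assoc] at hX
          rw [Matrix.mul_assoc]
          exact hX
        exact extract_left w hw0 _ key
    have dphase : ∀ a, a ≤ c → ∀ N,
        (IsLocalMin (fun N' => f (PP d k N' 0 k)) N ∧ PP d k N 0 k = W ∧
          (PP d k N 0 (c + 1)).rank < d j) →
        f' W * (PP d k N 0 a)ᵀ = 0 := by
      apply downInd
      · -- base a = c
        intro N hN
        have h0 := uphase k (by omega) (le_refl k) N hN
        rwa [PP_self, Matrix.transpose_one, Matrix.one_mul] at h0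
      · -- step a+1 → a
        intro a ha1 hstep N hN
        have hak : a < k := by omega
        by_cases hker : ∃ w : Fin (d (a + 1)) → ℝ, w ≠ 0 ∧ PP d k N (a + 1) (c + 1) *ᵥ w = 0
        · obtain ⟨w, hw0, hw⟩ := hker
          have key : ∀ z : Fin (d a) → ℝ,
              f' W * (PP d k N 0 a)ᵀ * vecMulVec z w = 0 := by
            intro z
            have hPΔ : PP d k N (a + 1) (c + 1) *
                (vecMulVec w z : Matrix (Fin (d (a+1))) (Fin (d a)) ℝ) = 0 := by
              rw [mul_vecMulVec, hw, vecMulVec_zero_left]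
            have hvalid : PP d k N (a + 1) k * vecMulVec w z * PP d k N 0 a = 0 := by
              rw [show PP d k N (a + 1) k = PP d k N (c + 1) k * PP d k N (a + 1) (c + 1) from
                  PP_split N (by omega) (by omega),
                Matrix.mul_assoc (PP d k N (c + 1) k), hPΔ, Matrix.mul_zero, Matrix.zero_mul]
            have hev := isLocalMin_pert hN.1 ⟨a, hak⟩ (vecMulVec w z) hvalid
            have hXev : ∀ᶠ t in nhds (0:ℝ),
                t • (f' W * ((vecMulVec w z : Matrix (Fin (d (a+1))) (Fin (d a)) ℝ)
                  * PP d k N 0 a)ᵀ) = 0 := by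
              filter_upwards [hev] with t ht
              have hmidc : PP d k (pert d k N ⟨a, hak⟩ (t • vecMulVec w z)) 0 (c + 1)
                  = PP d k N 0 (c + 1) + PP d k N (a + 1) (c + 1) * (t • vecMulVec w z)
                      * PP d k N 0 a :=
                PP_pert_mid N ⟨a, hak⟩ _ (Nat.zero_le _) (show a < c + 1 by omega)
              have hmidc' : PP d k (pert d k N ⟨a, hak⟩ (t • vecMulVec w z)) 0 (c + 1)
                  = PP d k N 0 (c + 1) := by
                rw [hmidc, Matrix.mul_smul, hPΔ, smul_zero, Matrix.zero_mul, add_zero]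
              have heq := hstep (pert d k N ⟨a, hak⟩ (t • vecMulVec w z))
                ⟨ht.1, by rw [ht.2, hN.2.1], by rw [hmidc']; exact hN.2.2⟩
              have hmida : PP d k (pert d k N ⟨a, hak⟩ (t • vecMulVec w z)) 0 (a + 1)
                  = PP d k N 0 (a + 1) + PP d k N (a + 1) (a + 1) * (t • vecMulVec w z)
                      * PP d k N 0 a :=
                PP_pert_mid N ⟨a, hak⟩ _ (Nat.zero_le _) (Nat.lt_succ_self a)
              rw [hmida, PP_self, Matrix.one_mul, Matrix.smul_mul,
                Matrix.transpose_add, Matrix.mul_add, hstep N hN, zero_add,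
                Matrix.transpose_smul, Matrix.mul_smul] at heq
              exact heq
            have hX := smul_extract _ hXev
            rw [Matrix.transpose_mul, vecMulVec_transpose, ← Matrix.mul_assoc] at hX
            exact hX
          exact extract_right w hw0 _ key
        · push_neg at hker
          have hfull : ∀ w, PP d k N (a + 1) (c + 1) *ᵥ w = 0 → w = 0 := by
            intro w hw
            by_contra h0
            exact (hker w h0) hw
          have hsplit : PP d k N 0 (c + 1) = PP d k N (a + 1) (c + 1) * PP d k N 0 (a + 1) :=
            PP_split N (by omega) (by omega)
          have hrk : (PP d k N 0 (a + 1)).rank < d j := by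
            have h5 := rank_mul_full_col (PP d k N (a + 1) (c + 1)) (PP d k N 0 (a + 1)) hfull
            rw [← hsplit] at h5
            rw [← h5]
            exact hN.2.2
          exact absurd hrk (ihc a (by omega) (by omega) N hN.1 hN.2.1)
    have hfinal := dphase 0 (Nat.zero_le c) N₀ ⟨hloc₀, hprod₀, hrank₀⟩
    rw [PP_self, Matrix.transpose_one, Matrix.mul_one] at hfinal
    exact hW hfinal


end Stmt10Aux

open Matrix in
/-- at a local minimum of `L_k` with an interior bottleneck of width
`d j`, if `f'(M_k ⋯ M_1) ≠ 0` then both `A = M_k ⋯ M_{j+1}` and `B = M_j ⋯ M_1`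
have full rank `d j`. -/
theorem stmt_10 (d : ℕ → ℕ) (k : ℕ) (hk : 2 ≤ k)
    (f : Matrix (Fin (d k)) (Fin (d 0)) ℝ → ℝ)
    (hconv : ConvexOn ℝ Set.univ f) (hdiff : Differentiable ℝ f)
    (f' : Matrix (Fin (d k)) (Fin (d 0)) ℝ → Matrix (Fin (d k)) (Fin (d 0)) ℝ)
    (hf' : ∀ M H, fderiv ℝ f M H = ((f' M)ᵀ * H).trace)
    (j : ℕ) (hj0 : 0 < j) (hjk : j < k) (hmin : ∀ i ≤ k, d j ≤ d i)
    (M : ∀ i : Fin k, Matrix (Fin (d (i.1 + 1))) (Fin (d i.1)) ℝ)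
    (hloc : IsLocalMin (fun N => f (chainProd d (ext d k N) 0 k)) M)
    (hgrad : f' (chainProd d (ext d k M) 0 k) ≠ 0) :
    (chainProd d (ext d k M) j k).rank = d j ∧
      (chainProd d (ext d k M) 0 j).rank = d j := by
  classical
  obtain ⟨c, rfl⟩ : ∃ c, j = c + 1 := ⟨j - 1, (Nat.succ_pred_eq_of_pos hj0).symm⟩
  constructor
  · -- A side
    have hA := Stmt10Aux.Aside hdiff hf' hmin (Stmt10Aux.PP d k M 0 k) hgrad k (c + 1)
      (by omega) (le_refl _) hjk M hloc rfl
    have hle : (Stmt10Aux.PP d k M (c + 1) k).rank ≤ d (c + 1) := by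
      have := Matrix.rank_le_card_width (Stmt10Aux.PP d k M (c + 1) k)
      simpa using this
    have : (Stmt10Aux.PP d k M (c + 1) k).rank = d (c + 1) := by omega
    exact this
  · -- B side
    have hB := Stmt10Aux.Bside hdiff hf' hjk hmin (Stmt10Aux.PP d k M 0 k) hgrad c
      (le_refl _) M hloc rfl
    have hle : (Stmt10Aux.PP d k M 0 (c + 1)).rank ≤ d (c + 1) := by
      have := Matrix.rank_le_card_height (Stmt10Aux.PP d k M 0 (c + 1))
      simpa using this
    have : (Stmt10Aux.PP d k M 0 (c + 1)).rank = d (c + 1) := by omega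
    exact this
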